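/- Let n ≥ 3, d = n−1, and let ℓ, ℓ′ ∈ ℝⁿ be ordered generic d-regular length vectors such that {n} is ℓ-long if and only if {n} is ℓ′-long. Then a subset J ⊆ {1,…,n} is ℓ-short if and only if it is ℓ′-short. In particular, there are exactly two chambers of generic (n−1)-regular length vectors in ℝⁿ up to permutation. -/
import Mathlib


noncomputable section

/-- `ℝ^d` with the Euclidean norm. -/
abbrev Euc (d : ℕ) := EuclideanSpace ℝ (Fin d)

/-- A subset `J` is `ℓ`-short if the sum of its entries is less than the sum over the complement. -/
def Short {n : ℕ} (ℓ : Fin n → ℝ) (J : Finset (Fin n)) : Prop :=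
  ∑ j ∈ J, ℓ j < ∑ j ∈ Jᶜ, ℓ j

/-- A subset is `ℓ`-long if its complement is `ℓ`-short. -/
def Long {n : ℕ} (ℓ : Fin n → ℝ) (J : Finset (Fin n)) : Prop := Short ℓ Jᶜ

/-- `ℓ` is generic if every subset is `ℓ`-short or `ℓ`-long. -/
def Generic {n : ℕ} (ℓ : Fin n → ℝ) : Prop := ∀ J : Finset (Fin n), Short ℓ J ∨ Long ℓ J

/-- `ℓ` is `d`-regular if the intersection of all `ℓ`-long subsets of cardinality `d-1`
is nonempty (with the convention that the empty intersection is everything). -/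
def DRegular (d : ℕ) {n : ℕ} (ℓ : Fin n → ℝ) : Prop :=
  ∃ i : Fin n, ∀ J : Finset (Fin n), J.card = d - 1 → Long ℓ J → i ∈ J

lemma short_iff {n : ℕ} (ℓ : Fin n → ℝ) (J : Finset (Fin n)) :
    Short ℓ J ↔ 2 * ∑ j ∈ J, ℓ j < ∑ j, ℓ j := by
  have h := Finset.sum_add_sum_compl J ℓ
  unfold Short
  constructor <;> intro <;> linarith

lemma long_iff {n : ℕ} (ℓ : Fin n → ℝ) (J : Finset (Fin n)) :
    Long ℓ J ↔ 2 * ∑ j ∈ J, ℓ j > ∑ j, ℓ j := by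
  have h := Finset.sum_add_sum_compl J ℓ
  rw [Long, short_iff]
  constructor <;> intro <;> linarith

lemma char_lemma {n : ℕ} (hn : 3 ≤ n) (ℓ : Fin n → ℝ)
    (hpos : ∀ i, 0 < ℓ i) (hord : Monotone ℓ) (hgen : Generic ℓ)
    (hreg : DRegular (n - 1) ℓ) (m : Fin n) (hm : (m : ℕ) = n - 1) (J : Finset (Fin n)) :
    Short ℓ J ↔ ((Long ℓ ({m} : Finset (Fin n)) ∧ m ∉ J) ∨
      (¬ Long ℓ ({m} : Finset (Fin n)) ∧
        (m ∈ J → J = {m}) ∧ J ≠ ({m} : Finset (Fin n))ᶜ)) := by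
  have hle : ∀ j, ℓ j ≤ ℓ m := by
    intro j
    exact hord (by rw [Fin.le_def, hm]; omega)
  have hsub : ∀ {A B : Finset (Fin n)}, A ⊆ B → ∑ j ∈ A, ℓ j ≤ ∑ j ∈ B, ℓ j := by
    intro A B h
    exact Finset.sum_le_sum_of_subset_of_nonneg h (fun i _ _ => (hpos i).le)
  have hmsum : ∑ j ∈ ({m} : Finset (Fin n)), ℓ j = ℓ m := Finset.sum_singleton _ _
  have hmc : ∑ j ∈ ({m} : Finset (Fin n)), ℓ j + ∑ j ∈ ({m} : Finset (Fin n))ᶜ, ℓ j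
      = ∑ j, ℓ j := Finset.sum_add_sum_compl _ _
  by_cases hA : Long ℓ ({m} : Finset (Fin n))
  · have hiff2 : ∀ p q : Prop, (p ↔ q) → (p ↔ (Long ℓ ({m} : Finset (Fin n)) ∧ q) ∨
        (¬ Long ℓ ({m} : Finset (Fin n)) ∧ (m ∈ J → J = {m}) ∧ J ≠ ({m} : Finset (Fin n))ᶜ)) :=
      fun p q h => by tauto
    apply hiff2 _ _
    rw [long_iff, hmsum] at hA
    constructor
    · intro hS hmJ
      rw [short_iff] at hS
      have h1 : ℓ m ≤ ∑ j ∈ J, ℓ j := by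
        have := hsub (Finset.singleton_subset_iff.mpr hmJ)
        rw [hmsum] at this; exact this
      linarith
    · intro hmJ
      rw [short_iff]
      have h1 : ∑ j ∈ J, ℓ j ≤ ∑ j ∈ ({m} : Finset (Fin n))ᶜ, ℓ j :=
        hsub (fun x hx => Finset.mem_compl.mpr (by
          simp only [Finset.mem_singleton]; rintro rfl; exact hmJ hx))
      linarith
  · have hiff2 : ∀ p q : Prop, (p ↔ q) → (p ↔ (Long ℓ ({m} : Finset (Fin n)) ∧ m ∉ J) ∨
        (¬ Long ℓ ({m} : Finset (Fin n)) ∧ q)) := fun p q h => by tauto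
    apply hiff2 _ _
    have hBs : Short ℓ ({m} : Finset (Fin n)) := (hgen _).resolve_right hA
    rw [short_iff, hmsum] at hBs
    -- key: every pair containing m is long
    obtain ⟨i, hi⟩ := hreg
    have claim1 : ∀ a b : Fin n, a ≠ b → i ∈ ({a, b} : Finset (Fin n)) →
        2 * (ℓ a + ℓ b) > ∑ j, ℓ j := by
      intro a b hab hiP
      have hcard : ({a, b} : Finset (Fin n)).card = 2 := Finset.card_pair hab
      have hns : ¬ Short ℓ ({a, b} : Finset (Fin n)) := by
        intro hS
        have hmem : i ∈ ({a, b} : Finset (Fin n))ᶜ := by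
          apply hi
          · rw [Finset.card_compl, hcard, Fintype.card_fin]; omega
          · rw [Long, compl_compl]; exact hS
        rw [Finset.mem_compl] at hmem
        exact hmem hiP
      have hL := (hgen _).resolve_left hns
      rw [long_iff, Finset.sum_pair hab] at hL
      linarith
    have key : ∀ j, j ≠ m → 2 * (ℓ m + ℓ j) > ∑ j, ℓ j := by
      intro j hjm
      by_cases him : i = m
      · exact claim1 m j (Ne.symm hjm) (by subst him; exact Finset.mem_insert_self _ _)
      · by_cases hji : j = i
        · exact claim1 m j (Ne.symm hjm)
            (by rw [hji]; exact Finset.mem_insert_of_mem (Finset.mem_singleton_self _))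
        · have h1 := claim1 i j (fun h => hji h.symm) (Finset.mem_insert_self _ _)
          have := hle i
          linarith
    constructor
    · intro hS
      rw [short_iff] at hS
      constructor
      · intro hmJ
        by_contra hne
        have hex : ∃ j ∈ J, j ≠ m := by
          by_contra h
          push_neg at h
          exact hne (Finset.eq_singleton_iff_unique_mem.mpr ⟨hmJ, h⟩)
        obtain ⟨j, hjJ, hjm⟩ := hex
        have hps : ({m, j} : Finset (Fin n)) ⊆ J := by
          intro x hx
          rcases Finset.mem_insert.mp hx with rfl | hx
          · exact hmJ
          · rw [Finset.mem_singleton] at hx; subst hx; exact hjJ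
        have h1 := hsub hps
        rw [Finset.sum_pair (Ne.symm hjm)] at h1
        have := key j hjm
        linarith
      · rintro rfl
        linarith
    · rintro ⟨h1, h2⟩
      rw [short_iff]
      by_cases hmJ : m ∈ J
      · rw [h1 hmJ, hmsum]; linarith
      · have hsub3 : J ⊆ ({m} : Finset (Fin n))ᶜ :=
          fun x hx => Finset.mem_compl.mpr (by
            simp only [Finset.mem_singleton]; rintro rfl; exact hmJ hx)
        have hex : ∃ j, j ∉ ({m} : Finset (Fin n)) ∧ j ∉ J := by
          by_contra h
          push_neg at h
          refine h2 (Finset.Subset.antisymm hsub3 ?_)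
          intro x hx
          exact h x (Finset.mem_compl.mp hx)
        obtain ⟨j, hj1, hj2⟩ := hex
        rw [Finset.mem_singleton] at hj1
        have hps : ({m, j} : Finset (Fin n)) ⊆ Jᶜ := by
          intro x hx
          rcases Finset.mem_insert.mp hx with rfl | hx
          · exact Finset.mem_compl.mpr hmJ
          · rw [Finset.mem_singleton] at hx; subst hx; exact Finset.mem_compl.mpr hj2
        have hps2 := hsub hps
        rw [Finset.sum_pair (Ne.symm hj1)] at hps2
        have h3 := key j hj1
        have h4 := Finset.sum_add_sum_compl J ℓ
        linarith

/-- Let `n ≥ 3`, `d = n-1`, and let `ℓ, ℓ'` be ordered generic `d`-regular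
length vectors in `ℝⁿ` such that `{n}` is `ℓ`-long iff `{n}` is `ℓ'`-long. Then a subset `J`
is `ℓ`-short iff it is `ℓ'`-short. -/
theorem stmt8 (n : ℕ) (hn : 3 ≤ n) (ℓ ℓ' : Fin n → ℝ)
    (hpos : ∀ i, 0 < ℓ i) (hpos' : ∀ i, 0 < ℓ' i)
    (hord : Monotone ℓ) (hord' : Monotone ℓ')
    (hgen : Generic ℓ) (hgen' : Generic ℓ')
    (hreg : DRegular (n - 1) ℓ) (hreg' : DRegular (n - 1) ℓ')
    (hiff : Long ℓ ({⟨n - 1, by omega⟩} : Finset (Fin n)) ↔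
      Long ℓ' ({⟨n - 1, by omega⟩} : Finset (Fin n))) :
    ∀ J : Finset (Fin n), Short ℓ J ↔ Short ℓ' J := by
  intro J
  set m : Fin n := ⟨n - 1, by omega⟩ with hmdef
  rw [char_lemma hn ℓ hpos hord hgen hreg m rfl J,
      char_lemma hn ℓ' hpos' hord' hgen' hreg' m rfl J]
  have hiff' : Long ℓ ({m} : Finset (Fin n)) ↔ Long ℓ' ({m} : Finset (Fin n)) := hiff
  tauto
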